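/- arXiv:1901.08464 — 7 statements merged into one kernel-verified Lean document; each statement's English description precedes it below -/
import Mathlib

section
/- For any two sets 𝒯₀ and 𝒯₁ of complete L-theories, Cl_E(𝒯₀ ∪ 𝒯₁) = Cl_E(𝒯₀) ∪ Cl_E(𝒯₁). -/
open FirstOrder Language Cardinal Set

universe u v w

variable {L : FirstOrder.Language.{u, v}}

/-- A complete theory: a satisfiable set of sentences containing each sentence or its
negation (`Theory.IsMaximal` in Mathlib). -/
abbrev CTheory (L : FirstOrder.Language.{u, v}) : Type max u v :=
  {T : L.Theory // T.IsMaximal}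

/-- The neighbourhood `𝒯_φ = {T ∈ 𝒯 | φ ∈ T}`. -/
def nbhd (𝒯 : Set (CTheory L)) (φ : L.Sentence) : Set (CTheory L) :=
  {T | T ∈ 𝒯 ∧ φ ∈ T.1}

/-- `T` is an accumulation point of `𝒯` if for every sentence `φ ∈ T` the set `𝒯_φ` is
infinite. -/
def IsAccPoint (𝒯 : Set (CTheory L)) (T : CTheory L) : Prop :=
  ∀ φ : L.Sentence, φ ∈ T.1 → (nbhd 𝒯 φ).Infinite

/-- The `E`-closure of `𝒯`: `𝒯` together with all its accumulation points. -/
def ClE (𝒯 : Set (CTheory L)) : Set (CTheory L) :=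
  𝒯 ∪ {T | IsAccPoint 𝒯 T}

/-- The `e`-spectrum of `𝒯`: the cardinality of the set of accumulation points of `𝒯`. -/
noncomputable def eSp (𝒯 : Set (CTheory L)) : Cardinal :=
  Cardinal.mk {T : CTheory L // IsAccPoint 𝒯 T}

/-- Two sentences are inconsistent if `{φ, ψ}` is unsatisfiable. -/
def Inconsistent (φ ψ : L.Sentence) : Prop :=
  ¬ FirstOrder.Language.Theory.IsSatisfiable ({φ, ψ} : L.Theory)

open Classical in
/-- `RSge α 𝒯` says `RS(𝒯) ≥ α`: `RS(𝒯) ≥ 0` iff `𝒯 ≠ ∅`; `RS(𝒯) ≥ 1` iff `𝒯` is infinite;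
for `β ≥ 1`, `RS(𝒯) ≥ β + 1` iff there are pairwise inconsistent sentences `φ_n`, `n ∈ ℕ`,
with `RS(𝒯_{φ_n}) ≥ β` for all `n`; for limit `λ`, `RS(𝒯) ≥ λ` iff `RS(𝒯) ≥ β` for all
`β < λ`. -/
noncomputable def RSge (α : Ordinal.{w}) : Set (CTheory L) → Prop :=
  @Ordinal.limitRecOn (fun _ => Set (CTheory L) → Prop) α
    (fun 𝒯 => 𝒯.Nonempty)
    (fun β ih 𝒯 =>
      if β = 0 then 𝒯.Infinite
      else ∃ φ : ℕ → L.Sentence,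
        (∀ m n : ℕ, m ≠ n → Inconsistent (φ m) (φ n)) ∧ ∀ k : ℕ, ih (nbhd 𝒯 (φ k)))
    (fun β _ ih 𝒯 => ∀ γ : Ordinal, ∀ h : γ < β, ih γ h 𝒯)

/-- `RS(𝒯) = α` for an ordinal `α`: `RS(𝒯) ≥ α` but not `RS(𝒯) ≥ α + 1`. -/
def RSeq (𝒯 : Set (CTheory L)) (α : Ordinal.{w}) : Prop :=
  RSge α 𝒯 ∧ ¬ RSge (α + 1) 𝒯

/-- `RS(𝒯) = ∞`: `RS(𝒯) ≥ α` for every ordinal `α`. -/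
def RSinf (𝒯 : Set (CTheory L)) : Prop :=
  ∀ α : Ordinal.{w}, RSge α 𝒯

/-- `ds(𝒯) = n` (relative to `RS(𝒯) = α`): `n` is the largest natural number for which
there exist `n` pairwise inconsistent sentences `φ_1, …, φ_n` with `RS(𝒯_{φ_i}) = α`. -/
def dsEq (𝒯 : Set (CTheory L)) (α : Ordinal.{w}) (n : ℕ) : Prop :=
  IsGreatest {m : ℕ | ∃ φ : Fin m → L.Sentence,
    (∀ i j : Fin m, i ≠ j → Inconsistent (φ i) (φ j)) ∧
    ∀ i : Fin m, RSeq (nbhd 𝒯 (φ i)) α} n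

/-- `𝒯` is `e`-minimal: for every sentence `φ`, `𝒯_φ` is finite or `𝒯_{¬φ}` is finite. -/
def EMinimal (𝒯 : Set (CTheory L)) : Prop :=
  ∀ φ : L.Sentence, (nbhd 𝒯 φ).Finite ∨ (nbhd 𝒯 φ.not).Finite

/-- `𝒯` is `a`-minimal: `𝒯` has infinitely many accumulation points and for every sentence
`φ`, `𝒯_φ` or `𝒯_{¬φ}` has only finitely many accumulation points. -/
def AMinimal (𝒯 : Set (CTheory L)) : Prop :=
  {T : CTheory L | IsAccPoint 𝒯 T}.Infinite ∧
  ∀ φ : L.Sentence,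
    {T : CTheory L | IsAccPoint (nbhd 𝒯 φ) T}.Finite ∨
    {T : CTheory L | IsAccPoint (nbhd 𝒯 φ.not) T}.Finite

/-- `𝒯` is `α`-minimal: `RS(𝒯) = α` and for every sentence `φ`, `RS(𝒯_φ) < α` or
`RS(𝒯_{¬φ}) < α`. -/
def AlphaMinimal (𝒯 : Set (CTheory L)) (α : Ordinal.{w}) : Prop :=
  RSeq 𝒯 α ∧
  ∀ φ : L.Sentence, ¬ RSge α (nbhd 𝒯 φ) ∨ ¬ RSge α (nbhd 𝒯 φ.not)

lemma inf_mem_iff_aux (T : CTheory L) (φ ψ : L.Sentence) :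
    φ ⊓ ψ ∈ T.1 ↔ φ ∈ T.1 ∧ ψ ∈ T.1 := by
  rw [T.2.mem_iff_models, T.2.mem_iff_models, T.2.mem_iff_models]
  constructor
  · intro h
    constructor <;> intro M <;> have := h M <;>
        simp only [Sentence.Realize, BoundedFormula.realize_inf] at this <;>
        intro v xs
    · exact (this v xs).1
    · exact (this v xs).2
  · rintro ⟨h1, h2⟩ M
    simp only [Sentence.Realize, BoundedFormula.realize_inf]
    intro v xs
    exact ⟨h1 M v xs, h2 M v xs⟩

/-- Theorem 1.2: For any two sets `𝒯₀`, `𝒯₁` of complete `L`-theories,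
`Cl_E(𝒯₀ ∪ 𝒯₁) = Cl_E(𝒯₀) ∪ Cl_E(𝒯₁)`. -/
theorem clE_union (𝒯₀ 𝒯₁ : Set (CTheory L)) :
    ClE (𝒯₀ ∪ 𝒯₁) = ClE 𝒯₀ ∪ ClE 𝒯₁ := by
  ext T
  unfold ClE
  simp only [Set.mem_union, Set.mem_setOf_eq]
  constructor
  · rintro ((h | h) | h)
    · exact Or.inl (Or.inl h)
    · exact Or.inr (Or.inl h)
    · by_contra hc
      have hn0 : ¬ IsAccPoint 𝒯₀ T := fun ha => hc (Or.inl (Or.inr ha))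
      have hn1 : ¬ IsAccPoint 𝒯₁ T := fun ha => hc (Or.inr (Or.inr ha))
      unfold IsAccPoint at hn0 hn1
      push_neg at hn0 hn1
      obtain ⟨φ₀, hφ₀, hf0⟩ := hn0
      obtain ⟨φ₁, hφ₁, hf1⟩ := hn1
      have hmem : φ₀ ⊓ φ₁ ∈ T.1 := (inf_mem_iff_aux T φ₀ φ₁).2 ⟨hφ₀, hφ₁⟩
      have hinf := h _ hmem
      apply hinf
      apply Set.Finite.subset (hf0.union hf1)
      rintro S ⟨hS, hSφ⟩
      obtain ⟨h1', h2'⟩ := (inf_mem_iff_aux S φ₀ φ₁).1 hSφ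
      rcases hS with hS | hS
      · exact Or.inl ⟨hS, h1'⟩
      · exact Or.inr ⟨hS, h2'⟩
  · rintro ((h | h) | (h | h))
    · exact Or.inl (Or.inl h)
    · refine Or.inr (fun φ hφ => Set.Infinite.mono ?_ (h φ hφ))
      exact fun S hS => ⟨Or.inl hS.1, hS.2⟩
    · exact Or.inl (Or.inr h)
    · refine Or.inr (fun φ hφ => Set.Infinite.mono ?_ (h φ hφ))
      exact fun S hS => ⟨Or.inr hS.1, hS.2⟩
end

section
/- Let 𝒯₀ be an E-closed set of complete L-theories and let 𝒯'₀ be a generating set for 𝒯₀. Then the following are equivalent: (1) 𝒯'₀ is the least generating set for 𝒯₀; (2) 𝒯'₀ is a minimal generating set for 𝒯₀; (3) every theory in 𝒯'₀ is isolated by some set (𝒯'₀)_φ, i.e., for every T ∈ 𝒯'₀ there is a sentence φ ∈ T with (𝒯'₀)_φ = {T}; (4) every theory in 𝒯'₀ is isolated by some set (𝒯₀)_φ, i.e., for every T ∈ 𝒯'₀ there is a sentence φ ∈ T with (𝒯₀)_φ = {T}. -/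
open FirstOrder Language Cardinal Set

universe u v w

variable {L : FirstOrder.Language.{u, v}}

/-- `𝒯'` is a generating set for the `E`-closed set `𝒯₀`. -/
def Generates (𝒯' 𝒯₀ : Set (CTheory L)) : Prop :=
  𝒯' ⊆ 𝒯₀ ∧ ClE 𝒯' = 𝒯₀

private lemma CT.mem_iff (T : CTheory L) (φ : L.Sentence) :
    φ ∈ T.1 ↔ T.2.1.some ⊨ φ := by
  rw [T.2.mem_iff_models, T.2.isComplete.realize_sentence_iff]

private lemma CT.inf_mem {T : CTheory L} {φ ψ : L.Sentence} :
    φ ⊓ ψ ∈ T.1 ↔ φ ∈ T.1 ∧ ψ ∈ T.1 := by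
  simp only [CT.mem_iff]
  simp [Sentence.Realize]

private lemma CT.not_both {T : CTheory L} {φ : L.Sentence} (h : φ ∈ T.1) : φ.not ∉ T.1 := by
  rw [CT.mem_iff] at h ⊢
  simpa [Sentence.Realize] using h

private lemma CT.exists_sep {T S : CTheory L} (h : S ≠ T) :
    ∃ ψ : L.Sentence, ψ ∈ T.1 ∧ ψ ∉ S.1 := by
  by_contra hc
  push_neg at hc
  apply h
  apply Subtype.ext
  apply Set.Subset.antisymm _ hc
  intro φ hφ
  rcases T.2.2 φ with hT | hT
  · exact hT
  · exact absurd (hc _ hT) (CT.not_both hφ)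

private lemma CT.sep_finite {T : CTheory L} {φ : L.Sentence} (hφ : φ ∈ T.1)
    {G : Set (CTheory L)} (hG : G.Finite) :
    ∃ χ : L.Sentence, χ ∈ T.1 ∧ ∀ S : CTheory L, χ ∈ S.1 → φ ∈ S.1 ∧ (S ∈ G → S = T) := by
  refine Set.Finite.induction_on G hG ⟨φ, hφ, fun S hS => ⟨hS, fun h => h.elim⟩⟩ ?_
  rintro S₀ G' _ _ ⟨χ, hχT, hχ⟩
  by_cases h0 : S₀ = T
  · exact ⟨χ, hχT, fun S hS => ⟨(hχ S hS).1, fun hmem => by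
      rcases hmem with h | h
      · exact h ▸ h0
      · exact (hχ S hS).2 h⟩⟩
  · obtain ⟨ψ, hψT, hψS₀⟩ := CT.exists_sep h0
    refine ⟨χ ⊓ ψ, CT.inf_mem.2 ⟨hχT, hψT⟩, fun S hS => ?_⟩
    obtain ⟨hχS, hψS⟩ := CT.inf_mem.1 hS
    refine ⟨(hχ S hχS).1, fun hmem => ?_⟩
    rcases hmem with h | h
    · exact absurd (h ▸ hψS) hψS₀
    · exact (hχ S hχS).2 h

/-- If `T ∈ 𝒯'` is not isolated in `𝒯'`, then `T` is an accumulation point of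
`𝒯' \ {T}`. -/
private lemma key_isolated {𝒯' : Set (CTheory L)} {T : CTheory L} (hT : T ∈ 𝒯')
    (hniso : ¬ ∃ φ ∈ T.1, nbhd 𝒯' φ = {T}) :
    IsAccPoint (𝒯' \ {T}) T := by
  intro φ hφ
  by_contra hfin
  rw [Set.not_infinite] at hfin
  obtain ⟨χ, hχT, hχ⟩ := CT.sep_finite hφ hfin
  refine hniso ⟨χ, hχT, ?_⟩
  apply Set.Subset.antisymm
  · rintro S ⟨hS𝒯, hχS⟩
    by_contra hne
    rw [Set.mem_singleton_iff] at hne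
    exact hne ((hχ S hχS).2 ⟨⟨hS𝒯, hne⟩, (hχ S hχS).1⟩)
  · rintro S rfl
    exact ⟨hT, hχT⟩

private lemma ClE_mono {𝒮 𝒯 : Set (CTheory L)} (h : 𝒮 ⊆ 𝒯) : ClE 𝒮 ⊆ ClE 𝒯 := by
  rintro T (hT | hT)
  · exact Or.inl (h hT)
  · exact Or.inr fun φ hφ => (hT φ hφ).mono fun S hS => ⟨h hS.1, hS.2⟩

/-- Theorem 1.3: for an `E`-closed set `𝒯₀` with generating set `𝒯'`, the
following are equivalent: (1) `𝒯'` is the least generating set; (2) `𝒯'` is a minimal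
generating set; (3) every theory of `𝒯'` is isolated by some `(𝒯')_φ`; (4) every theory
of `𝒯'` is isolated by some `(𝒯₀)_φ`. -/
theorem least_generating_tfae (𝒯₀ 𝒯' : Set (CTheory L))
    (hclosed : ClE 𝒯₀ = 𝒯₀) (hgen : Generates 𝒯' 𝒯₀) :
    List.TFAE
      [∀ 𝒮 : Set (CTheory L), Generates 𝒮 𝒯₀ → 𝒯' ⊆ 𝒮,
       ∀ 𝒮 : Set (CTheory L), 𝒮 ⊆ 𝒯' → Generates 𝒮 𝒯₀ → 𝒮 = 𝒯',
       ∀ T ∈ 𝒯', ∃ φ ∈ T.1, nbhd 𝒯' φ = {T},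
       ∀ T ∈ 𝒯', ∃ φ ∈ T.1, nbhd 𝒯₀ φ = {T}] := by
  obtain ⟨hsub, hcl⟩ := hgen
  tfae_have 1 → 2
  | h1, 𝒮, h𝒮sub, h𝒮gen => Set.Subset.antisymm h𝒮sub (h1 𝒮 h𝒮gen)
  tfae_have 2 → 3
  | h2, T, hT => by
    by_contra hniso
    have hacc : IsAccPoint (𝒯' \ {T}) T := key_isolated hT hniso
    have hgen' : Generates (𝒯' \ {T}) 𝒯₀ := by
      refine ⟨Set.Subset.trans Set.diff_subset hsub, Set.Subset.antisymm ?_ ?_⟩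
      · exact hcl ▸ ClE_mono Set.diff_subset
      · intro S hS
        rw [← hcl] at hS
        rcases hS with hS | hS
        · by_cases hST : S = T
          · exact Or.inr (hST ▸ hacc)
          · exact Or.inl ⟨hS, hST⟩
        · refine Or.inr fun φ hφ => ((hS φ hφ).diff (Set.finite_singleton T)).mono ?_
          rintro S' ⟨⟨hS'𝒯, hφS'⟩, hS'T⟩
          exact ⟨⟨hS'𝒯, hS'T⟩, hφS'⟩
    have heq : 𝒯' \ {T} = 𝒯' := h2 (𝒯' \ {T}) Set.diff_subset hgen'
    rw [← heq] at hT
    exact hT.2 rfl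
  tfae_have 3 → 4
  | h3, T, hT => by
    obtain ⟨φ, hφ, hiso⟩ := h3 T hT
    refine ⟨φ, hφ, Set.Subset.antisymm ?_ ?_⟩
    · rintro S ⟨hS, hφS⟩
      rw [← hcl] at hS
      rcases hS with hS | hS
      · exact hiso ▸ (⟨hS, hφS⟩ : S ∈ nbhd 𝒯' φ)
      · exact absurd (hiso ▸ hS φ hφS) (Set.finite_singleton T).not_infinite
    · rintro S rfl
      exact ⟨hsub hT, hφ⟩
  tfae_have 4 → 1
  | h4, 𝒮, h𝒮gen, T, hT => by
    obtain ⟨φ, hφ, hiso⟩ := h4 T hT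
    obtain ⟨h𝒮sub, h𝒮cl⟩ := h𝒮gen
    have hT0 : T ∈ ClE 𝒮 := h𝒮cl.symm ▸ hsub hT
    rcases hT0 with hT0 | hT0
    · exact hT0
    · have : (nbhd 𝒯₀ φ).Infinite :=
        (hT0 φ hφ).mono fun S hS => ⟨h𝒮sub hS.1, hS.2⟩
      exact absurd (hiso ▸ this) (Set.finite_singleton T).not_infinite
  tfae_finish
end

section
/- An infinite family 𝒯 of complete L-theories is e-minimal if and only if it is e-categorical, i.e., 𝒯 satisfies 'for every L-sentence φ, 𝒯_φ is finite or 𝒯_{¬φ} is finite' if and only if e-Sp(𝒯) = 1 (𝒯 has exactly one accumulation point). -/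
open FirstOrder Language Cardinal Set

universe u v w

variable {L : FirstOrder.Language.{u, v}}

/-- A satisfiable theory cannot contain a sentence and its negation. -/
lemma not_mem_of_not_mem_aux {T : L.Theory} (hT : T.IsSatisfiable) {φ : L.Sentence}
    (h1 : φ ∈ T) (h2 : φ.not ∈ T) : False := by
  obtain ⟨M⟩ := hT
  have r1 : M ⊨ φ := T.realize_sentence_of_mem h1
  have r2 : M ⊨ φ.not := T.realize_sentence_of_mem h2
  rw [Sentence.realize_not] at r2
  exact r2 r1

/-- Every infinite family of complete theories has an accumulation point, which moreover
contains every sentence shared by all members of the family. -/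
lemma exists_accPoint (𝒮 : Set (CTheory L)) (h : 𝒮.Infinite) :
    ∃ T : CTheory L, IsAccPoint 𝒮 T ∧ ∀ φ : L.Sentence, (∀ S ∈ 𝒮, φ ∈ S.1) → φ ∈ T.1 := by
  haveI : Infinite ↥𝒮 := h.to_subtype
  set u : Ultrafilter ↥𝒮 := Filter.hyperfilter ↥𝒮 with hu
  set Tset : L.Theory := {φ | {S : ↥𝒮 | φ ∈ (S : CTheory L).1} ∈ u} with hTset
  have hmem : ∀ φ : L.Sentence, φ ∈ Tset ↔ {S : ↥𝒮 | φ ∈ (S : CTheory L).1} ∈ u :=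
    fun φ => Iff.rfl
  have hsat : Tset.IsSatisfiable := by
    rw [Theory.isSatisfiable_iff_isFinitelySatisfiable]
    intro T0 hT0
    have hinter : {S : ↥𝒮 | ∀ φ ∈ T0, φ ∈ (S : CTheory L).1} ∈ u := by
      have : {S : ↥𝒮 | ∀ φ ∈ T0, φ ∈ (S : CTheory L).1}
          = ⋂ φ ∈ T0, {S : ↥𝒮 | φ ∈ (S : CTheory L).1} := by
        ext S; simp
      rw [this]
      exact (Filter.biInter_finset_mem T0).2 fun φ hφ => hT0 (by simpa using hφ)
    obtain ⟨S, hS⟩ := Filter.nonempty_of_mem hinter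
    exact (S : CTheory L).2.1.mono fun φ hφ => hS φ (by simpa using hφ)
  have hcomp : ∀ φ : L.Sentence, φ ∈ Tset ∨ φ.not ∈ Tset := by
    intro φ
    have : {S : ↥𝒮 | φ ∈ (S : CTheory L).1} ∪ {S : ↥𝒮 | φ.not ∈ (S : CTheory L).1} ∈ u := by
      have : {S : ↥𝒮 | φ ∈ (S : CTheory L).1} ∪ {S : ↥𝒮 | φ.not ∈ (S : CTheory L).1}
          = Set.univ := by
        ext S
        simpa using (S : CTheory L).2.2 φ
      rw [this]; exact Filter.univ_mem
    exact (Ultrafilter.union_mem_iff.1 this)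
  have hinf' : ∀ φ ∈ Tset, (nbhd 𝒮 φ).Infinite := by
    intro φ hφ
    have h1 : {S : ↥𝒮 | φ ∈ (S : CTheory L).1}.Infinite := by
      by_contra hfin
      rw [Set.not_infinite] at hfin
      exact Set.Finite.notMem_hyperfilter hfin ((hmem φ).1 hφ)
    have : (Subtype.val '' {S : ↥𝒮 | φ ∈ (S : CTheory L).1}).Infinite :=
      h1.image (Set.injOn_of_injective Subtype.val_injective)
    refine this.mono ?_
    rintro T ⟨S, hS, rfl⟩
    exact ⟨S.2, hS⟩
  refine ⟨⟨Tset, ⟨hsat, hcomp⟩⟩, hinf', ?_⟩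
  intro φ hφ
  have : {S : ↥𝒮 | φ ∈ (S : CTheory L).1} = Set.univ := by
    ext S; simpa using hφ S.1 S.2
  exact (hmem φ).2 (this ▸ Filter.univ_mem)

lemma nbhd_mono {𝒮 𝒯 : Set (CTheory L)} (h : 𝒮 ⊆ 𝒯) (φ : L.Sentence) :
    nbhd 𝒮 φ ⊆ nbhd 𝒯 φ := fun T hT => ⟨h hT.1, hT.2⟩

/-- Theorem 1.4: an infinite family of complete theories is `e`-minimal if
and only if it is `e`-categorical, i.e. `e`-Sp(𝒯) = 1. -/
theorem eMinimal_iff_eCategorical (𝒯 : Set (CTheory L)) (hinf : 𝒯.Infinite) :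
    EMinimal 𝒯 ↔ eSp 𝒯 = 1 := by
  constructor
  · -- e-minimal → exactly one accumulation point
    intro hmin
    set U : L.Theory := {φ | (nbhd 𝒯 φ).Infinite} with hU
    have hUsat : U.IsSatisfiable := by
      rw [Theory.isSatisfiable_iff_isFinitelySatisfiable]
      intro T0 hT0
      have hfin : (⋃ φ ∈ T0, nbhd 𝒯 φ.not).Finite := by
        apply Set.Finite.biUnion T0.finite_toSet
        intro φ hφ
        rcases hmin φ with h | h
        · exact absurd (hT0 (by simpa using hφ)) (by simpa [hU] using h)
        · exact h
      obtain ⟨T, hT𝒯, hTn⟩ := (hinf.diff hfin).nonempty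
      refine T.2.1.mono fun φ hφ => ?_
      rcases T.2.2 φ with h | h
      · exact h
      · exact absurd (show T ∈ ⋃ ψ ∈ T0, nbhd 𝒯 ψ.not from
          Set.mem_biUnion (show φ ∈ T0 by simpa using hφ) ⟨hT𝒯, h⟩) hTn
    have hUcomp : ∀ φ : L.Sentence, φ ∈ U ∨ φ.not ∈ U := by
      intro φ
      by_contra hcon
      push_neg at hcon
      have h1 : (nbhd 𝒯 φ).Finite := Set.not_infinite.1 hcon.1
      have h2 : (nbhd 𝒯 φ.not).Finite := Set.not_infinite.1 hcon.2
      refine hinf ((h1.union h2).subset fun T hT => ?_)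
      rcases T.2.2 φ with h | h
      · exact Or.inl ⟨hT, h⟩
      · exact Or.inr ⟨hT, h⟩
    set Uc : CTheory L := ⟨U, hUsat, hUcomp⟩ with hUc
    have hacc : IsAccPoint 𝒯 Uc := fun φ hφ => hφ
    have huniq : ∀ T : CTheory L, IsAccPoint 𝒯 T → T = Uc := by
      intro T hT
      have hsub : T.1 ⊆ U := fun φ hφ => hT φ hφ
      have : T.1 = U := by
        apply Set.Subset.antisymm hsub
        intro φ hφ
        rcases T.2.2 φ with h | h
        · exact h
        · exact absurd (hsub h) fun hn => not_mem_of_not_mem_aux hUsat hφ hn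
      exact Subtype.ext this
    have hset : {T : CTheory L | IsAccPoint 𝒯 T} = {Uc} := by
      ext T
      exact ⟨fun h => huniq T h, fun h => h ▸ hacc⟩
    have : eSp 𝒯 = Cardinal.mk ↥({Uc} : Set (CTheory L)) :=
      Cardinal.mk_congr (Equiv.setCongr hset)
    rw [this, Cardinal.mk_singleton]
  · -- exactly one accumulation point → e-minimal
    intro hsp φ
    by_contra hcon
    push_neg at hcon
    have h1 : (nbhd 𝒯 φ).Infinite := hcon.1
    have h2 : (nbhd 𝒯 φ.not).Infinite := hcon.2
    obtain ⟨T1, hT1acc, hT1mem⟩ := exists_accPoint (nbhd 𝒯 φ) h1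
    obtain ⟨T2, hT2acc, hT2mem⟩ := exists_accPoint (nbhd 𝒯 φ.not) h2
    have hφT1 : φ ∈ T1.1 := hT1mem φ fun S hS => hS.2
    have hφT2 : φ.not ∈ T2.1 := hT2mem φ.not fun S hS => hS.2
    have hT1 : IsAccPoint 𝒯 T1 := fun ψ hψ =>
      (hT1acc ψ hψ).mono (nbhd_mono (fun T hT => hT.1) ψ)
    have hT2 : IsAccPoint 𝒯 T2 := fun ψ hψ =>
      (hT2acc ψ hψ).mono (nbhd_mono (fun T hT => hT.1) ψ)
    have hne : T1 ≠ T2 := by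
      intro h
      exact not_mem_of_not_mem_aux T1.2.1 hφT1 (h ▸ hφT2)
    have hsub : Subsingleton {T : CTheory L // IsAccPoint 𝒯 T} :=
      Cardinal.le_one_iff_subsingleton.1 (le_of_eq hsp)
    exact hne (congrArg Subtype.val (hsub.elim ⟨T1, hT1⟩ ⟨T2, hT2⟩))
end

section
/- An infinite family 𝒯 of complete L-theories is e-minimal if and only if RS(𝒯) = 1 and ds(𝒯) = 1. -/
open FirstOrder Language Cardinal Set

universe u v w

variable {L : FirstOrder.Language.{u, v}}

section Aux
open FirstOrder Language Set

variable {L : FirstOrder.Language.{u, v}}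

open Classical in
lemma RSge_succ_def (β : Ordinal.{w}) : (RSge (Order.succ β) : Set (CTheory L) → Prop) =
    fun 𝒯 => if β = 0 then 𝒯.Infinite
      else ∃ φ : ℕ → L.Sentence,
        (∀ m n : ℕ, m ≠ n → Inconsistent (φ m) (φ n)) ∧
          ∀ k : ℕ, RSge β (nbhd 𝒯 (φ k)) := by
  unfold RSge
  rw [Ordinal.limitRecOn_succ]

lemma RSge_one (𝒯 : Set (CTheory L)) : RSge (1 : Ordinal.{w}) 𝒯 ↔ 𝒯.Infinite := by
  rw [show (1 : Ordinal.{w}) = Order.succ 0 by simp, RSge_succ_def]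
  simp

lemma RSge_two (𝒯 : Set (CTheory L)) : RSge ((1 : Ordinal.{w}) + 1) 𝒯 ↔
    ∃ φ : ℕ → L.Sentence,
      (∀ m n : ℕ, m ≠ n → Inconsistent (φ m) (φ n)) ∧ ∀ k : ℕ, (nbhd 𝒯 (φ k)).Infinite := by
  rw [show ((1 : Ordinal.{w}) + 1) = Order.succ 1 from Ordinal.add_one_eq_succ 1, RSge_succ_def]
  simp only [if_neg (one_ne_zero (α := Ordinal.{w})), RSge_one]

lemma mem_top (T : CTheory L) : (⊤ : L.Sentence) ∈ T.1 := by
  refine T.2.mem_of_models ?_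
  rw [Theory.models_sentence_iff]
  intro M
  simp [Sentence.Realize]

lemma nbhd_top (𝒯 : Set (CTheory L)) : nbhd 𝒯 (⊤ : L.Sentence) = 𝒯 := by
  ext T
  simp [nbhd, mem_top]

lemma inconsistent_not (φ : L.Sentence) : Inconsistent φ φ.not := by
  rintro ⟨M⟩
  have h1 : M ⊨ φ := M.is_model.realize_of_mem φ (by simp)
  have h2 : M ⊨ φ.not := M.is_model.realize_of_mem φ.not (by simp)
  rw [Sentence.realize_not] at h2
  exact h2 h1

lemma inconsistent_symm {φ ψ : L.Sentence} (h : Inconsistent φ ψ) : Inconsistent ψ φ := by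
  unfold Inconsistent at *
  rwa [Set.pair_comm]

lemma nbhd_subset_not {φ ψ : L.Sentence} (h : Inconsistent φ ψ) (𝒯 : Set (CTheory L)) :
    nbhd 𝒯 ψ ⊆ nbhd 𝒯 φ.not := by
  rintro T ⟨hT, hψ⟩
  refine ⟨hT, ?_⟩
  rcases T.2.mem_or_not_mem φ with hφ | hφ
  · exact absurd (T.2.1.mono (by intro x hx; rcases hx with rfl | rfl; exacts [hφ, hψ])) h
  · exact hφ

lemma nbhd_nbhd_subset (𝒯 : Set (CTheory L)) (φ ψ : L.Sentence) :
    nbhd (nbhd 𝒯 φ) ψ ⊆ nbhd 𝒯 ψ := fun _T hT => ⟨hT.1.1, hT.2⟩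

lemma eMinimal_not_RSge_two {𝒯 : Set (CTheory L)} (hE : EMinimal 𝒯) :
    ¬ RSge ((1 : Ordinal.{w}) + 1) 𝒯 := by
  rw [RSge_two]
  rintro ⟨φ, hpair, hinfk⟩
  rcases hE (φ 0) with h | h
  · exact (hinfk 0) h
  · exact ((hinfk 1).mono (nbhd_subset_not (hpair 0 1 (by norm_num)) 𝒯)) h

universe x in
lemma not_RSge_two_subset {𝒯 : Set (CTheory L)}
    (h : ¬ RSge ((1 : Ordinal.{w}) + 1) 𝒯) (φ : L.Sentence) :
    ¬ RSge ((1 : Ordinal.{x}) + 1) (nbhd 𝒯 φ) := by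
  rw [RSge_two] at h ⊢
  rintro ⟨ψ, hpair, hinfk⟩
  exact h ⟨ψ, hpair, fun k => (hinfk k).mono (nbhd_nbhd_subset 𝒯 φ (ψ k))⟩

end Aux

universe x

lemma eMin_aux (𝒯 : Set (CTheory L)) (hinf : 𝒯.Infinite) :
    EMinimal 𝒯 ↔ (RSeq 𝒯 (1 : Ordinal.{w}) ∧ dsEq 𝒯 (1 : Ordinal.{x}) 1) := by
  constructor
  · intro hE
    have hns := eMinimal_not_RSge_two hE
    have hRSeq : RSeq 𝒯 (1 : Ordinal.{w}) := ⟨(RSge_one 𝒯).mpr hinf, hns⟩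
    refine ⟨hRSeq, ⟨⟨fun _ => (⊤ : L.Sentence), ?_, ?_⟩, ?_⟩⟩
    · intro i j hij; exact absurd (Subsingleton.elim i j) hij
    · intro i; rw [nbhd_top]
      exact ⟨(RSge_one 𝒯).mpr hinf, eMinimal_not_RSge_two hE⟩
    · rintro m ⟨φ, hpair, hRS⟩
      by_contra hm
      push_neg at hm
      have h01 : (⟨0, by omega⟩ : Fin m) ≠ ⟨1, by omega⟩ := by
        simp [Fin.ext_iff]
      have hinc := hpair _ _ h01
      have hi0 := (RSge_one _).mp (hRS ⟨0, by omega⟩).1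
      have hi1 := (RSge_one _).mp (hRS ⟨1, by omega⟩).1
      rcases hE (φ ⟨0, by omega⟩) with h | h
      · exact hi0 h
      · exact (hi1.mono (nbhd_subset_not hinc 𝒯)) h
  · rintro ⟨⟨h1, h2⟩, hds⟩
    intro φ
    by_contra h
    push_neg at h
    have hφ : RSeq (nbhd 𝒯 φ) (1 : Ordinal.{x}) :=
      ⟨(RSge_one _).mpr h.1, not_RSge_two_subset h2 φ⟩
    have hφn : RSeq (nbhd 𝒯 φ.not) (1 : Ordinal.{x}) :=
      ⟨(RSge_one _).mpr h.2, not_RSge_two_subset h2 φ.not⟩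
    have h2mem : 2 ∈ {m : ℕ | ∃ ψ : Fin m → L.Sentence,
        (∀ i j : Fin m, i ≠ j → Inconsistent (ψ i) (ψ j)) ∧
        ∀ i : Fin m, RSeq (nbhd 𝒯 (ψ i)) (1 : Ordinal.{x})} := by
      refine ⟨![φ, φ.not], ?_, ?_⟩
      · intro i j hij
        fin_cases i <;> fin_cases j <;> simp_all <;>
          [exact inconsistent_not φ; exact inconsistent_symm (inconsistent_not φ)]
      · intro i; fin_cases i <;> simpa
    have := hds.2 h2mem
    omega


/-- Proposition 2.3: an infinite family `𝒯` is `e`-minimal if and only if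
`RS(𝒯) = 1` and `ds(𝒯) = 1`. -/
theorem eMinimal_iff_rank_one_degree_one (𝒯 : Set (CTheory L)) (hinf : 𝒯.Infinite) :
    EMinimal 𝒯 ↔ (RSeq 𝒯 1 ∧ dsEq 𝒯 1 1) := by
  exact eMin_aux 𝒯 hinf
end

section
/- If a family 𝒯 of complete L-theories satisfies RS(𝒯) ≥ 2, then e-Sp(𝒯) ≥ ℵ₀, i.e., 𝒯 has infinitely many accumulation points. -/
open FirstOrder Language Cardinal Set

universe u v w

variable {L : FirstOrder.Language.{u, v}}

lemma exists_accPoint_aux {L : FirstOrder.Language.{u, v}} (𝒯 𝒮 : Set (CTheory L))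
    (hsub : 𝒮 ⊆ 𝒯) (hinf : 𝒮.Infinite) (φ : L.Sentence)
    (hφ : ∀ S ∈ 𝒮, φ ∈ S.1) : ∃ T : CTheory L, IsAccPoint 𝒯 T ∧ φ ∈ T.1 := by
  haveI := hinf.to_subtype
  obtain ⟨U, hU⟩ := Ultrafilter.exists_le (Filter.cofinite : Filter ↥𝒮)
  have hUinf : ∀ A : Set ↥𝒮, A ∈ U → A.Infinite := by
    intro A hA
    by_contra hfin
    rw [Set.not_infinite] at hfin
    have h1 : Aᶜ ∈ U := hU hfin.compl_mem_cofinite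
    have h2 : (A ∩ Aᶜ : Set ↥𝒮) ∈ U := Filter.inter_mem hA h1
    rw [Set.inter_compl_self] at h2
    exact U.empty_notMem h2
  set Tset : L.Theory := {ψ | {s : ↥𝒮 | ψ ∈ (s : CTheory L).1} ∈ U} with hTset
  have hsat : Tset.IsSatisfiable := by
    rw [Theory.isSatisfiable_iff_isFinitelySatisfiable]
    intro T0 hT0
    have hmem : (⋂ ψ ∈ (T0 : Set L.Sentence), {s : ↥𝒮 | ψ ∈ (s : CTheory L).1}) ∈ U :=
      (Filter.biInter_mem T0.finite_toSet).2 fun ψ hψ => hT0 hψ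
    obtain ⟨s, hs⟩ := Filter.nonempty_of_mem hmem
    refine ((s : CTheory L).2.1).mono ?_
    intro ψ hψ
    simp only [Set.mem_iInter] at hs
    exact hs ψ hψ
  have hmax : Tset.IsMaximal := by
    refine ⟨hsat, fun ψ => ?_⟩
    rcases Ultrafilter.mem_or_compl_mem U {s : ↥𝒮 | ψ ∈ (s : CTheory L).1} with hm | hm
    · exact Or.inl hm
    · refine Or.inr (Filter.mem_of_superset hm ?_)
      intro s hs
      rcases (s : CTheory L).2.2 ψ with h | h
      · exact absurd h hs
      · exact h
  refine ⟨⟨Tset, hmax⟩, ?_, ?_⟩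
  · intro ψ hψ
    have hA : ({s : ↥𝒮 | ψ ∈ (s : CTheory L).1}).Infinite := hUinf _ hψ
    have himg : (Subtype.val '' {s : ↥𝒮 | ψ ∈ (s : CTheory L).1}).Infinite :=
      hA.image (Subtype.val_injective.injOn)
    refine himg.mono ?_
    rintro x ⟨s, hs, rfl⟩
    exact ⟨hsub s.2, hs⟩
  · have huniv : {s : ↥𝒮 | φ ∈ (s : CTheory L).1} = Set.univ := by
      ext s; simpa using hφ s s.2
    show {s : ↥𝒮 | φ ∈ (s : CTheory L).1} ∈ U
    rw [huniv]; exact Filter.univ_mem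

lemma RSge_one_iff {L : FirstOrder.Language.{u, v}} (𝒮 : Set (CTheory L)) :
    RSge.{u,v,w} 1 𝒮 ↔ 𝒮.Infinite := by
  have h1 : (1 : Ordinal.{w}) = Order.succ 0 := by simp
  rw [RSge, h1, Ordinal.limitRecOn_succ]
  simp

lemma RSge_two_iff {L : FirstOrder.Language.{u, v}} (𝒯 : Set (CTheory L)) :
    RSge.{u,v,w} 2 𝒯 ↔ ∃ φ : ℕ → L.Sentence,
      (∀ m n : ℕ, m ≠ n → Inconsistent (φ m) (φ n)) ∧
      ∀ k : ℕ, (nbhd 𝒯 (φ k)).Infinite := by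
  have h2 : (2 : Ordinal.{w}) = Order.succ 1 := by
    rw [← one_add_one_eq_two, Ordinal.add_one_eq_succ]
  rw [RSge, h2, Ordinal.limitRecOn_succ]
  simp only [if_neg one_ne_zero]
  constructor
  · rintro ⟨φ, hinc, hk⟩
    exact ⟨φ, hinc, fun k => (RSge_one_iff _).1 (hk k)⟩
  · rintro ⟨φ, hinc, hk⟩
    exact ⟨φ, hinc, fun k => (RSge_one_iff _).2 (hk k)⟩

/-- Proposition 2.6: if `RS(𝒯) ≥ 2` then `e`-Sp(𝒯) ≥ ℵ₀. -/
theorem eSp_infinite_of_rank_ge_two (𝒯 : Set (CTheory L)) (h : RSge 2 𝒯) :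
    Cardinal.aleph0 ≤ eSp 𝒯 := by
  obtain ⟨φ, hinc, hinf⟩ := (RSge_two_iff 𝒯).1 h
  have hex : ∀ n : ℕ, ∃ T : CTheory L, IsAccPoint 𝒯 T ∧ φ n ∈ T.1 :=
    fun n => exists_accPoint_aux 𝒯 (nbhd 𝒯 (φ n)) (fun S hS => hS.1) (hinf n) (φ n)
      (fun S hS => hS.2)
  choose f hf1 hf2 using hex
  have hinj : Function.Injective fun n => (⟨f n, hf1 n⟩ : {T : CTheory L // IsAccPoint 𝒯 T}) := by
    intro m n hmn
    by_contra hne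
    have heq : f m = f n := congrArg Subtype.val hmn
    refine hinc m n hne ?_
    refine ((f m).2.1).mono ?_
    intro ψ hψ
    rcases hψ with h | h
    · exact h ▸ hf2 m
    · simp only [Set.mem_singleton_iff] at h
      exact h ▸ (heq ▸ hf2 n)
  haveI : Infinite {T : CTheory L // IsAccPoint 𝒯 T} := Infinite.of_injective _ hinj
  exact Cardinal.infinite_iff.1 this
end

section
/- Let 𝒯 be a family of complete L-theories and let (φ_k), k ∈ ℕ, be pairwise inconsistent L-sentences such that each 𝒯_{φ_k} is infinite. Then there exists an accumulation point T of 𝒯 with ¬φ_k ∈ T for every k ∈ ℕ; in particular, T is not an accumulation point of any of the families 𝒯_{φ_k}. -/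
open FirstOrder Language Cardinal Set

universe u v w

variable {L : FirstOrder.Language.{u, v}}

/-- A satisfiable theory cannot contain both a sentence and its negation. -/
lemma notMem_and_notMem {T : L.Theory} (hT : T.IsSatisfiable) (ψ : L.Sentence)
    (h1 : ψ ∈ T) (h2 : ψ.not ∈ T) : False := by
  obtain ⟨M⟩ := hT
  have hM1 : M ⊨ ψ := M.is_model.realize_of_mem ψ h1
  have hM2 : M ⊨ ψ.not := M.is_model.realize_of_mem ψ.not h2
  rw [Sentence.realize_not] at hM2
  exact hM2 hM1

/-- Proposition 2.8: if `φ_k`, `k ∈ ℕ`, are pairwise inconsistent sentences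
with each `𝒯_{φ_k}` infinite, then `𝒯` has an accumulation point `T` containing every
`¬φ_k`; in particular, `T` is not an accumulation point of any `𝒯_{φ_k}`. -/
theorem accumulation_point_avoiding (𝒯 : Set (CTheory L)) (φ : ℕ → L.Sentence)
    (hinc : ∀ m n : ℕ, m ≠ n → Inconsistent (φ m) (φ n))
    (hinf : ∀ k : ℕ, (nbhd 𝒯 (φ k)).Infinite) :
    ∃ T : CTheory L, IsAccPoint 𝒯 T ∧ (∀ k : ℕ, (φ k).not ∈ T.1) ∧
      ∀ k : ℕ, ¬ IsAccPoint (nbhd 𝒯 (φ k)) T := by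
  classical
  -- pick a theory in each `nbhd 𝒯 (φ k)`
  choose f hf using fun k => (hinf k).nonempty
  have hfmem : ∀ k, f k ∈ 𝒯 := fun k => (hf k).1
  have hfφ : ∀ k, φ k ∈ (f k).1 := fun k => (hf k).2
  -- `φ n ∉ f m` for `m ≠ n`
  have hnotin : ∀ m n : ℕ, m ≠ n → φ n ∉ (f m).1 := by
    intro m n hmn hn
    exact hinc m n hmn (((f m).2.1).mono (by
      intro x hx
      rcases hx with rfl | hx
      · exact hfφ m
      · simpa using hx ▸ hn))
  have hfinj : Function.Injective f := by
    intro m n hmn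
    by_contra h
    exact hnotin m n h (hmn ▸ hfφ n)
  -- a nonprincipal ultrafilter
  have : (Filter.cofinite : Filter ℕ).NeBot := Filter.cofinite_neBot
  let U : Ultrafilter ℕ := Ultrafilter.of Filter.cofinite
  have hUcof : (U : Filter ℕ) ≤ Filter.cofinite := Ultrafilter.of_le _
  have hUinf : ∀ s : Set ℕ, s ∈ U → s.Infinite := by
    intro s hs
    by_contra hni
    rw [Set.not_infinite] at hni
    have hfin := hni
    have : sᶜ ∈ U := hUcof hfin.compl_mem_cofinite
    exact (Ultrafilter.compl_notMem_iff.2 hs) this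
  -- the limit theory
  set Tl : L.Theory := {ψ | {k | ψ ∈ (f k).1} ∈ U} with hTl
  have hTlsat : Tl.IsSatisfiable := by
    rw [Theory.isSatisfiable_iff_isFinitelySatisfiable]
    intro T0 hT0
    have : (⋂ ψ ∈ T0, {k | ψ ∈ (f k).1}) ∈ U := by
      refine (Filter.biInter_finset_mem T0).2 ?_
      intro ψ hψ
      exact hT0 hψ
    obtain ⟨k, hk⟩ := (hUinf _ this).nonempty
    refine ((f k).2.1).mono ?_
    intro ψ hψ
    simp only [Set.mem_iInter] at hk
    exact hk ψ hψ
  have hTlmax : Tl.IsMaximal := by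
    refine ⟨hTlsat, fun ψ => ?_⟩
    rcases Ultrafilter.mem_or_compl_mem U {k | ψ ∈ (f k).1} with h | h
    · exact Or.inl h
    · right
      refine U.sets_of_superset h ?_
      intro k hk
      exact ((f k).2.2 ψ).resolve_left hk
  refine ⟨⟨Tl, hTlmax⟩, ?_, ?_, ?_⟩
  · -- accumulation point
    intro ψ hψ
    have hset : {k | ψ ∈ (f k).1}.Infinite := hUinf _ hψ
    have : (f '' {k | ψ ∈ (f k).1}).Infinite := hset.image (hfinj.injOn)
    refine this.mono ?_
    rintro _ ⟨k, hk, rfl⟩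
    exact ⟨hfmem k, hk⟩
  · -- contains each `¬ φ k`
    intro k
    have hsub : {m | φ k ∈ (f m).1} ⊆ {k} := by
      intro m hm
      by_contra h
      exact hnotin m k (by simpa using h) hm
    have hnot : {m | φ k ∈ (f m).1} ∉ U := by
      intro h
      exact ((hUinf _ h).mono hsub) (Set.finite_singleton k)
    have := (hTlmax.2 (φ k)).resolve_left hnot
    exact this
  · -- not an accumulation point of any `nbhd 𝒯 (φ k)`
    intro k hacc
    have hmem : (φ k).not ∈ Tl := by
      have hsub : {m | φ k ∈ (f m).1} ⊆ {k} := by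
        intro m hm
        by_contra h
        exact hnotin m k (by simpa using h) hm
      have hnot : {m | φ k ∈ (f m).1} ∉ U := by
        intro h
        exact ((hUinf _ h).mono hsub) (Set.finite_singleton k)
      exact (hTlmax.2 (φ k)).resolve_left hnot
    have := hacc (φ k).not hmem
    refine this ?_
    have : nbhd (nbhd 𝒯 (φ k)) (φ k).not = ∅ := by
      ext T'
      simp only [nbhd, Set.mem_setOf_eq, Set.mem_empty_iff_false, iff_false]
      rintro ⟨⟨_, h1⟩, h2⟩
      exact notMem_and_notMem T'.2.1 (φ k) h1 h2
    rw [this]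
    exact Set.finite_empty
end

section
/- For any family 𝒯 of complete L-theories and any n ≥ 1: RS(𝒯) = 2 and ds(𝒯) = n if and only if there are pairwise inconsistent L-sentences φ_1, …, φ_n such that 𝒯 is the disjoint union of the subfamilies 𝒯_{φ_1}, …, 𝒯_{φ_n} and each 𝒯_{φ_i} is a-minimal. -/
open FirstOrder Language Cardinal Set

universe u v w

variable {L : FirstOrder.Language.{u, v}}

namespace RankAux

open FirstOrder Language Set

variable {L : FirstOrder.Language.{u, v}}

/-- The set of accumulation points. -/
abbrev accSet (𝒳 : Set (CTheory L)) : Set (CTheory L) := {T | IsAccPoint 𝒳 T}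

lemma mem_nbhd {𝒳 : Set (CTheory L)} {φ : L.Sentence} {T : CTheory L} :
    T ∈ nbhd 𝒳 φ ↔ T ∈ 𝒳 ∧ φ ∈ T.1 := Iff.rfl

lemma nbhd_subset (𝒳 : Set (CTheory L)) (φ : L.Sentence) : nbhd 𝒳 φ ⊆ 𝒳 :=
  fun _ h => h.1

lemma nbhd_mono {𝒳 𝒴 : Set (CTheory L)} (h : 𝒳 ⊆ 𝒴) (φ : L.Sentence) :
    nbhd 𝒳 φ ⊆ nbhd 𝒴 φ := fun _ ht => ⟨h ht.1, ht.2⟩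

lemma realize_inf' {M : Type*} [L.Structure M] {φ ψ : L.Sentence} :
    M ⊨ φ ⊓ ψ ↔ M ⊨ φ ∧ M ⊨ ψ := BoundedFormula.realize_inf

lemma realize_top' {M : Type*} [L.Structure M] : M ⊨ (⊤ : L.Sentence) :=
  BoundedFormula.realize_top.2 trivial

/-- Derive a contradiction from an inconsistent pair realized in a nonempty structure. -/
lemma inc_not_realize {φ ψ : L.Sentence} (h : Inconsistent φ ψ)
    (M : Type (max u v)) [L.Structure M] [Nonempty M] (hφ : M ⊨ φ) (hψ : M ⊨ ψ) : False := by
  apply h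
  have : M ⊨ ({φ, ψ} : L.Theory) := (Theory.model_iff _).2 (by
    rintro χ (rfl | hχ)
    · exact hφ
    · rw [Set.mem_singleton_iff] at hχ; subst hχ; exact hψ)
  exact ⟨Theory.ModelType.of _ M⟩

/-- Prove inconsistency by a semantic argument. -/
lemma inconsistent_of {φ ψ : L.Sentence}
    (h : ∀ (M : Type (max u v)) [L.Structure M], Nonempty M → M ⊨ φ → M ⊨ ψ → False) :
    Inconsistent φ ψ := by
  rintro ⟨M⟩
  exact h M M.nonempty'
    (Theory.realize_sentence_of_mem ({φ, ψ} : L.Theory) (Set.mem_insert φ {ψ}))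
    (Theory.realize_sentence_of_mem ({φ, ψ} : L.Theory)
      (Set.mem_insert_of_mem φ rfl))

lemma inc_symm {φ ψ : L.Sentence} (h : Inconsistent φ ψ) : Inconsistent ψ φ := by
  unfold Inconsistent at *
  rwa [Set.pair_comm]

lemma inconsistent_mono {a b x y : L.Sentence} (hab : Inconsistent a b)
    (hx : ∀ (M : Type (max u v)) [L.Structure M], M ⊨ x → M ⊨ a)
    (hy : ∀ (M : Type (max u v)) [L.Structure M], M ⊨ y → M ⊨ b) :
    Inconsistent x y :=
  inconsistent_of fun M _ hne hxM hyM => inc_not_realize hab M (hx M hxM) (hy M hyM)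

lemma inc_not_mem_both {φ ψ : L.Sentence} (h : Inconsistent φ ψ)
    {T : CTheory L} (hφ : φ ∈ T.1) (hψ : ψ ∈ T.1) : False := by
  exact h (T.2.1.mono (by
    rintro χ (rfl | hχ)
    · exact hφ
    · rw [Set.mem_singleton_iff] at hχ; subst hχ; exact hψ))

lemma disjoint_nbhd {φ ψ : L.Sentence} (h : Inconsistent φ ψ) (𝒳 𝒴 : Set (CTheory L)) :
    Disjoint (nbhd 𝒳 φ) (nbhd 𝒴 ψ) := by
  rw [Set.disjoint_left]
  rintro T ⟨_, h1⟩ ⟨_, h2⟩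
  exact inc_not_mem_both h h1 h2

/-- Closure of complete theories under (nonempty-)semantic consequence. -/
lemma mem_of_mem_of_ent (T : CTheory L) {φ ψ : L.Sentence} (hφ : φ ∈ T.1)
    (h : ∀ (M : Type (max u v)) [L.Structure M], Nonempty M → M ⊨ φ → M ⊨ ψ) : ψ ∈ T.1 :=
  T.2.mem_of_models (Theory.models_sentence_iff.2 fun M =>
    h M inferInstance (Theory.realize_sentence_of_mem T.1 hφ))

lemma mem_top (T : CTheory L) : (⊤ : L.Sentence) ∈ T.1 :=
  T.2.mem_of_models (Theory.models_sentence_iff.2 fun _ => realize_top')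

lemma not_mem_iff {T : CTheory L} {φ : L.Sentence} : φ.not ∈ T.1 ↔ φ ∉ T.1 := by
  constructor
  · intro h1 h2
    obtain ⟨M⟩ := T.2.1
    exact (Sentence.realize_not M).1 (Theory.realize_sentence_of_mem T.1 h1)
      (Theory.realize_sentence_of_mem T.1 h2)
  · intro h2
    exact (T.2.mem_or_not_mem φ).resolve_left h2

lemma mem_inf_iff {T : CTheory L} {φ ψ : L.Sentence} :
    φ ⊓ ψ ∈ T.1 ↔ φ ∈ T.1 ∧ ψ ∈ T.1 := by
  constructor
  · intro h
    constructor
    · exact mem_of_mem_of_ent T h (fun M _ _ hM => (realize_inf'.1 hM).1)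
    · exact mem_of_mem_of_ent T h (fun M _ _ hM => (realize_inf'.1 hM).2)
  · rintro ⟨h1, h2⟩
    exact T.2.mem_of_models (Theory.models_sentence_iff.2 fun M =>
      realize_inf'.2 ⟨Theory.realize_sentence_of_mem T.1 h1,
        Theory.realize_sentence_of_mem T.1 h2⟩)

lemma nbhd_nbhd (𝒳 : Set (CTheory L)) (φ ψ : L.Sentence) :
    nbhd (nbhd 𝒳 φ) ψ = nbhd 𝒳 (φ ⊓ ψ) := by
  ext T
  simp only [mem_nbhd, mem_inf_iff]
  tauto

lemma nbhd_union_not (𝒳 : Set (CTheory L)) (φ : L.Sentence) :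
    nbhd 𝒳 φ ∪ nbhd 𝒳 φ.not = 𝒳 := by
  apply Set.Subset.antisymm (Set.union_subset (nbhd_subset _ _) (nbhd_subset _ _))
  intro T hT
  rcases T.2.mem_or_not_mem φ with h | h
  · exact Or.inl ⟨hT, h⟩
  · exact Or.inr ⟨hT, h⟩

lemma nbhd_iUnion {ι : Type*} (𝒵 : ι → Set (CTheory L)) (φ : L.Sentence) :
    nbhd (⋃ i, 𝒵 i) φ = ⋃ i, nbhd (𝒵 i) φ := by
  ext T
  simp only [mem_nbhd, Set.mem_iUnion]
  tauto

lemma accPoint_mono {𝒳 𝒴 : Set (CTheory L)} (h : 𝒳 ⊆ 𝒴) {T : CTheory L}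
    (hT : IsAccPoint 𝒳 T) : IsAccPoint 𝒴 T :=
  fun φ hφ => (hT φ hφ).mono (nbhd_mono h φ)

lemma accSet_mono {𝒳 𝒴 : Set (CTheory L)} (h : 𝒳 ⊆ 𝒴) : accSet 𝒳 ⊆ accSet 𝒴 :=
  fun _ hT => accPoint_mono h hT

end RankAux
namespace RankAux

variable {L : FirstOrder.Language.{u, v}}

/-- Conjunction of a list of sentences. -/
def conjList : List L.Sentence → L.Sentence
  | [] => ⊤
  | φ :: l => φ ⊓ conjList l

lemma realize_conjList {M : Type*} [L.Structure M] :
    ∀ l : List L.Sentence, (M ⊨ conjList l ↔ ∀ φ ∈ l, M ⊨ φ)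
  | [] => by simp [conjList, realize_top']
  | φ :: l => by
    simp only [conjList, realize_inf', List.mem_cons, realize_conjList l]
    constructor
    · rintro ⟨h1, h2⟩ ψ (rfl | hψ)
      exacts [h1, h2 _ hψ]
    · intro h
      exact ⟨h _ (Or.inl rfl), fun ψ hψ => h _ (Or.inr hψ)⟩

/-- Conjunction of finitely many sentences. -/
def conjFin {m : ℕ} (φ : Fin m → L.Sentence) : L.Sentence :=
  conjList (List.ofFn φ)

lemma realize_conjFin {M : Type*} [L.Structure M] {m : ℕ} {φ : Fin m → L.Sentence} :
    M ⊨ conjFin φ ↔ ∀ i, M ⊨ φ i := by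
  rw [conjFin, realize_conjList]
  constructor
  · intro h i
    exact h _ (by simp [List.mem_ofFn])
  · intro h ψ hψ
    rw [List.mem_ofFn] at hψ
    obtain ⟨i, rfl⟩ := hψ
    exact h i

lemma mem_conjFin {T : CTheory L} {m : ℕ} {φ : Fin m → L.Sentence} :
    conjFin φ ∈ T.1 ↔ ∀ i, φ i ∈ T.1 := by
  constructor
  · intro h i
    exact mem_of_mem_of_ent T h (fun M _ _ hM => realize_conjFin.1 hM i)
  · intro h
    exact T.2.mem_of_models (Theory.models_sentence_iff.2 fun M =>
      realize_conjFin.2 fun i => Theory.realize_sentence_of_mem T.1 (h i))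

/-- Every infinite family of complete theories has an accumulation point, which moreover
contains every sentence common to all members of the family. -/
lemma exists_accPoint {𝒳 : Set (CTheory L)} (h : 𝒳.Infinite) :
    ∃ T : CTheory L, IsAccPoint 𝒳 T ∧ ∀ ψ : L.Sentence, (∀ S ∈ 𝒳, ψ ∈ S.1) → ψ ∈ T.1 := by
  have hne : (Filter.cofinite ⊓ Filter.principal 𝒳).NeBot := h.cofinite_inf_principal_neBot
  set U : Ultrafilter (CTheory L) := Ultrafilter.of (Filter.cofinite ⊓ Filter.principal 𝒳)
    with hU
  have hle : (U : Filter (CTheory L)) ≤ Filter.cofinite ⊓ Filter.principal 𝒳 :=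
    Ultrafilter.of_le _
  have hX : 𝒳 ∈ U := hle (Filter.mem_inf_of_right (Filter.mem_principal_self 𝒳))
  have hinf : ∀ A ∈ U, A.Infinite := by
    intro A hA
    by_contra hfin
    rw [Set.not_infinite] at hfin
    have hc : Aᶜ ∈ U := hle (Filter.mem_inf_of_left hfin.compl_mem_cofinite)
    exact (Ultrafilter.compl_notMem_iff.2 hA) hc
  set T0 : L.Theory := {φ | nbhd 𝒳 φ ∈ U} with hT0
  have hsat : T0.IsSatisfiable := by
    rw [Theory.isSatisfiable_iff_isFinitelySatisfiable]
    intro T1 hT1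
    have hmem : (⋂ φ ∈ T1, nbhd 𝒳 φ) ∈ U := (Filter.biInter_finset_mem T1).2 fun φ hφ => hT1 hφ
    obtain ⟨S, hS⟩ := (hinf _ hmem).nonempty
    apply S.2.1.mono
    intro φ hφ
    simp only [Set.mem_iInter] at hS
    exact (hS φ hφ).2
  have hmax : T0.IsMaximal := by
    refine ⟨hsat, fun φ => ?_⟩
    have : nbhd 𝒳 φ ∪ nbhd 𝒳 φ.not ∈ U := by
      rw [nbhd_union_not]; exact hX
    exact (Ultrafilter.union_mem_iff.1 this).imp id id
  refine ⟨⟨T0, hmax⟩, fun φ hφ => hinf _ hφ, fun ψ hψ => ?_⟩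
  show nbhd 𝒳 ψ ∈ U
  have : 𝒳 ⊆ nbhd 𝒳 ψ := fun S hS => ⟨hS, hψ S hS⟩
  exact U.toFilter.mem_of_superset hX this

end RankAux
namespace RankAux

variable {L : FirstOrder.Language.{u, v}}

lemma RSge_zero (𝒯 : Set (CTheory L)) : RSge (0 : Ordinal.{w}) 𝒯 ↔ 𝒯.Nonempty := by
  rw [RSge, Ordinal.limitRecOn_zero]

lemma RSge_succ (β : Ordinal.{w}) (𝒯 : Set (CTheory L)) :
    RSge (Order.succ β) 𝒯 ↔
      (if β = 0 then 𝒯.Infinite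
       else ∃ φ : ℕ → L.Sentence,
        (∀ m n : ℕ, m ≠ n → Inconsistent (φ m) (φ n)) ∧
          ∀ k : ℕ, RSge β (nbhd 𝒯 (φ k))) := by
  rw [RSge, Ordinal.limitRecOn_succ]
  rfl

lemma RSge_one (𝒯 : Set (CTheory L)) : RSge (1 : Ordinal.{w}) 𝒯 ↔ 𝒯.Infinite := by
  have h1 : (1 : Ordinal.{w}) = Order.succ 0 := by simp
  rw [h1, RSge_succ, if_pos rfl]

lemma RSge_two (𝒯 : Set (CTheory L)) :
    RSge (2 : Ordinal.{w}) 𝒯 ↔ ∃ φ : ℕ → L.Sentence,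
      (∀ m n : ℕ, m ≠ n → Inconsistent (φ m) (φ n)) ∧
        ∀ k : ℕ, (nbhd 𝒯 (φ k)).Infinite := by
  have h1 : (2 : Ordinal.{w}) = Order.succ 1 := by
    rw [← one_add_one_eq_two, Ordinal.add_one_eq_succ]
  rw [h1, RSge_succ, if_neg one_ne_zero]
  constructor <;>
    (rintro ⟨φ, h1, h2⟩; exact ⟨φ, h1, fun k => by
      have := h2 k
      rwa [RSge_one] at *⟩)

lemma RSge_three (𝒯 : Set (CTheory L)) :
    RSge ((2 : Ordinal.{w}) + 1) 𝒯 ↔ ∃ φ : ℕ → L.Sentence,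
      (∀ m n : ℕ, m ≠ n → Inconsistent (φ m) (φ n)) ∧
        ∀ k : ℕ, RSge (2 : Ordinal.{w}) (nbhd 𝒯 (φ k)) := by
  rw [Ordinal.add_one_eq_succ, RSge_succ, if_neg two_ne_zero]

end RankAux
namespace RankAux

variable {L : FirstOrder.Language.{u, v}}

open Set

lemma accSet_infinite_of_RSge_two {𝒳 : Set (CTheory L)} (h : RSge (2 : Ordinal.{w}) 𝒳) :
    (accSet 𝒳).Infinite := by
  rw [RSge_two] at h
  obtain ⟨ψ, hpair, hinf⟩ := h
  have hpick : ∀ k : ℕ, ∃ T : CTheory L, IsAccPoint 𝒳 T ∧ ψ k ∈ T.1 := by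
    intro k
    obtain ⟨T, hT1, hT2⟩ := exists_accPoint (hinf k)
    exact ⟨T, accPoint_mono (nbhd_subset 𝒳 (ψ k)) hT1, hT2 _ (fun S hS => hS.2)⟩
  choose f hf1 hf2 using hpick
  have hinj : Function.Injective f := by
    intro k m hkm
    by_contra hne
    exact inc_not_mem_both (hpair k m hne) (hf2 k) (hkm ▸ hf2 m)
  exact Set.infinite_of_injective_forall_mem (s := accSet 𝒳) hinj fun k => hf1 k

private lemma step_lemma {𝒳 : Set (CTheory L)} {χ : L.Sentence}
    (h : {T : CTheory L | IsAccPoint 𝒳 T ∧ χ ∈ T.1}.Infinite) :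
    ∃ θ : L.Sentence, {T : CTheory L | IsAccPoint 𝒳 T ∧ (χ ⊓ θ) ∈ T.1}.Infinite ∧
      (nbhd 𝒳 (χ ⊓ θ.not)).Infinite := by
  obtain ⟨T1, hT1, T2, hT2, hne⟩ := h.nontrivial
  have hsep : ∃ θ0, θ0 ∈ T1.1 ∧ θ0 ∉ T2.1 := by
    by_contra hc
    push_neg at hc
    apply hne
    apply Subtype.ext
    apply Set.Subset.antisymm hc
    intro φ hφ
    by_contra hφ1
    exact inc_not_mem_both (φ := φ.not) (ψ := φ)
      (inconsistent_of fun M _ _ hM1 hM2 => (Sentence.realize_not M).1 hM1 hM2)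
      (hc _ (not_mem_iff.2 hφ1)) hφ
  obtain ⟨θ0, hm1, hm2⟩ := hsep
  have hm2' : θ0.not ∈ T2.1 := not_mem_iff.2 hm2
  have hsplit : {T : CTheory L | IsAccPoint 𝒳 T ∧ χ ∈ T.1} ⊆
      {T : CTheory L | IsAccPoint 𝒳 T ∧ (χ ⊓ θ0) ∈ T.1} ∪
      {T : CTheory L | IsAccPoint 𝒳 T ∧ (χ ⊓ θ0.not) ∈ T.1} := by
    rintro T ⟨ha, hχ⟩
    rcases T.2.mem_or_not_mem θ0 with h | h
    · exact Or.inl ⟨ha, mem_inf_iff.2 ⟨hχ, h⟩⟩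
    · exact Or.inr ⟨ha, mem_inf_iff.2 ⟨hχ, h⟩⟩
  rcases Set.infinite_union.1 (h.mono hsplit) with h1 | h2
  · exact ⟨θ0, h1, hT2.1 _ (mem_inf_iff.2 ⟨hT2.2, hm2'⟩)⟩
  · refine ⟨θ0.not, h2, ?_⟩
    have : θ0.not.not ∈ T1.1 := not_mem_iff.2 (fun hc => inc_not_mem_both
      (inconsistent_of fun M _ _ hM1 hM2 => (Sentence.realize_not M).1 hM1 hM2) hc hm1)
    exact hT1.1 _ (mem_inf_iff.2 ⟨hT1.2, this⟩)

lemma RSge_two_of_accSet_infinite {𝒳 : Set (CTheory L)} (h : (accSet 𝒳).Infinite) :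
    RSge (2 : Ordinal.{w}) 𝒳 := by
  classical
  rw [RSge_two]
  set P : L.Sentence → Prop := fun χ => {T : CTheory L | IsAccPoint 𝒳 T ∧ χ ∈ T.1}.Infinite
    with hP
  have htop : P ⊤ := by
    apply h.mono
    intro T hT
    exact ⟨hT, mem_top T⟩
  have hstep : ∀ c : {χ : L.Sentence // P χ},
      ∃ θ, P (c.1 ⊓ θ) ∧ (nbhd 𝒳 (c.1 ⊓ θ.not)).Infinite := fun c => step_lemma c.2
  choose θf hθ1 hθ2 using hstep
  let F : ℕ → {χ : L.Sentence // P χ} := fun n =>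
    Nat.rec ⟨⊤, htop⟩ (fun _ c => ⟨c.1 ⊓ θf c, hθ1 c⟩) n
  have hF : ∀ k : ℕ, (F (k + 1)).1 = (F k).1 ⊓ θf (F k) := fun k => rfl
  let ψ : ℕ → L.Sentence := fun k => (F k).1 ⊓ (θf (F k)).not
  have chain : ∀ k m : ℕ, m ≤ k → ∀ (M : Type (max u v)) [L.Structure M],
      M ⊨ (F k).1 → M ⊨ (F m).1 := by
    intro k
    induction k with
    | zero =>
      intro m hm M _ hM
      rw [Nat.le_zero.1 hm]
      exact hM
    | succ k ih =>
      intro m hm M _ hM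
      rcases Nat.eq_or_lt_of_le hm with h' | h'
      · rw [h']; exact hM
      · exact ih m (Nat.lt_succ_iff.1 h') M
          ((realize_inf'.1 (by rw [hF k] at hM; exact hM)).1)
  have key : ∀ m k : ℕ, m < k → Inconsistent (ψ m) (ψ k) := by
    intro m k hmk
    apply inconsistent_of
    intro M _ _ hm hk
    have h1 : M ⊨ (F k).1 := (realize_inf'.1 hk).1
    have h2 : M ⊨ (F (m + 1)).1 := chain k (m + 1) hmk M h1
    have h3 : M ⊨ θf (F m) := (realize_inf'.1 (by rw [hF m] at h2; exact h2)).2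
    have h4 : M ⊨ (θf (F m)).not := (realize_inf'.1 hm).2
    exact (Sentence.realize_not M).1 h4 h3
  refine ⟨ψ, ?_, fun k => hθ2 (F k)⟩
  intro m k hne
  rcases Nat.lt_or_ge m k with h' | h'
  · exact key m k h'
  · exact inc_symm (key k m (lt_of_le_of_ne h' (Ne.symm hne)))

lemma RSge_two_iff_accSet_infinite (𝒳 : Set (CTheory L)) :
    RSge (2 : Ordinal.{w}) 𝒳 ↔ (accSet 𝒳).Infinite :=
  ⟨accSet_infinite_of_RSge_two, RSge_two_of_accSet_infinite⟩

lemma RSge_two_mono {𝒳 𝒴 : Set (CTheory L)} (h : 𝒳 ⊆ 𝒴)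
    (h2 : RSge (2 : Ordinal.{w}) 𝒳) : RSge (2 : Ordinal.{w}) 𝒴 := by
  rw [RSge_two_iff_accSet_infinite] at *
  exact h2.mono (accSet_mono h)

lemma not_RSge_three_mono {𝒳 𝒴 : Set (CTheory L)} (h : 𝒳 ⊆ 𝒴)
    (h3 : ¬ RSge ((2 : Ordinal.{w}) + 1) 𝒴) : ¬ RSge ((2 : Ordinal.{w}) + 1) 𝒳 := by
  intro hc
  apply h3
  rw [RSge_three] at *
  obtain ⟨ψ, h1, h2⟩ := hc
  exact ⟨ψ, h1, fun k => RSge_two_mono (nbhd_mono h _) (h2 k)⟩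

end RankAux
namespace RankAux

variable {L : FirstOrder.Language.{u, v}}

open Set

lemma accSet_iUnion_subset {n : ℕ} (𝒵 : Fin n → Set (CTheory L)) :
    accSet (⋃ i, 𝒵 i) ⊆ ⋃ i, accSet (𝒵 i) := by
  intro T hT
  by_contra hc
  simp only [Set.mem_iUnion, not_exists] at hc
  have hc' : ∀ i, ∃ φ : L.Sentence, φ ∈ T.1 ∧ (nbhd (𝒵 i) φ).Finite := by
    intro i
    have := hc i
    unfold accSet IsAccPoint at this
    simp only [Set.mem_setOf_eq, not_forall] at this
    obtain ⟨φ, hφ, hfin⟩ := this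
    exact ⟨φ, hφ, Set.not_infinite.1 hfin⟩
  choose χ hχmem hχfin using hc'
  have hconj : conjFin χ ∈ T.1 := mem_conjFin.2 hχmem
  have hbig := hT _ hconj
  apply hbig
  have hsub : nbhd (⋃ i, 𝒵 i) (conjFin χ) ⊆ ⋃ i, nbhd (𝒵 i) (χ i) := by
    rintro S ⟨hS, hmemS⟩
    rw [Set.mem_iUnion] at hS ⊢
    obtain ⟨i, hi⟩ := hS
    exact ⟨i, hi, mem_conjFin.1 hmemS i⟩
  exact (Set.finite_iUnion hχfin).subset hsub

/-- The pigeonhole core: a family covered by `n` `a`-minimal subfamilies does not admit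
`m > n` pairwise inconsistent sentences whose neighbourhoods all have infinitely many
accumulation points. -/
lemma card_le_of_aMinimal_cover {n m : ℕ} {𝒯 : Set (CTheory L)} {𝒳 : Fin n → Set (CTheory L)}
    (hcov : 𝒯 = ⋃ i, 𝒳 i) (hmin : ∀ i, AMinimal (𝒳 i))
    {ψ : Fin m → L.Sentence} (hinc : ∀ j j' : Fin m, j ≠ j' → Inconsistent (ψ j) (ψ j'))
    (hA : ∀ j, (accSet (nbhd 𝒯 (ψ j))).Infinite) : m ≤ n := by
  by_contra hmn
  push_neg at hmn
  have hpick : ∀ j, ∃ i, (accSet (nbhd (𝒳 i) (ψ j))).Infinite := by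
    intro j
    by_contra hc
    push_neg at hc
    apply hA j
    apply Set.Finite.subset (Set.finite_iUnion hc)
    have : nbhd 𝒯 (ψ j) = ⋃ i, nbhd (𝒳 i) (ψ j) := by rw [hcov, nbhd_iUnion]
    rw [this]
    exact accSet_iUnion_subset _
  choose f hf using hpick
  obtain ⟨j, j', hne, heq⟩ := Fintype.exists_ne_map_eq_of_card_lt f (by simpa using hmn)
  have hsub : nbhd (𝒳 (f j)) (ψ j') ⊆ nbhd (𝒳 (f j)) (ψ j).not := by
    rintro S ⟨hS, hmemS⟩
    refine ⟨hS, not_mem_iff.2 fun hcon => ?_⟩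
    exact inc_not_mem_both (hinc j j' hne) hcon hmemS
  rcases (hmin (f j)).2 (ψ j) with hfin | hfin
  · exact hf j hfin
  · have h2 := hf j'
    rw [← heq] at h2
    exact h2 ((hfin.subset (accSet_mono hsub)))
end RankAux
namespace RankAux

variable {L : FirstOrder.Language.{u, v}}

/-- A universe-free version of `RSge 3`. -/
def Splits (𝒯 : Set (CTheory L)) : Prop :=
  ∃ ψ : ℕ → L.Sentence, (∀ m k : ℕ, m ≠ k → Inconsistent (ψ m) (ψ k)) ∧
    ∀ k : ℕ, (accSet (nbhd 𝒯 (ψ k))).Infinite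

lemma RSge_three_iff_splits (𝒯 : Set (CTheory L)) :
    RSge ((2 : Ordinal.{w}) + 1) 𝒯 ↔ Splits 𝒯 := by
  rw [RSge_three]
  apply exists_congr
  intro ψ
  apply and_congr_right'
  apply forall_congr'
  intro k
  exact RSge_two_iff_accSet_infinite _

/-- A universe-free characterisation of `RS(𝒯) = 2`. -/
lemma RSeq_two_iff (𝒯 : Set (CTheory L)) :
    RSeq 𝒯 (2 : Ordinal.{w}) ↔ (accSet 𝒯).Infinite ∧ ¬ Splits 𝒯 := by
  unfold RSeq
  rw [RSge_two_iff_accSet_infinite, RSge_three_iff_splits]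

lemma not_splits_mono {𝒳 𝒴 : Set (CTheory L)} (h : 𝒳 ⊆ 𝒴) (hY : ¬ Splits 𝒴) :
    ¬ Splits 𝒳 := by
  intro hc
  apply hY
  obtain ⟨ψ, h1, h2⟩ := hc
  exact ⟨ψ, h1, fun k => (h2 k).mono (accSet_mono (nbhd_mono h _))⟩

end RankAux
/-- Theorem 2.12: `RS(𝒯) = 2` with `ds(𝒯) = n` if and only if `𝒯` is a
disjoint union of subfamilies `𝒯_{φ_1}, …, 𝒯_{φ_n}`, for some pairwise inconsistent
sentences `φ_1, …, φ_n`, each of which is `a`-minimal. -/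
theorem rank_two_iff_aMinimal_partition (𝒯 : Set (CTheory L)) (n : ℕ) (hn : 1 ≤ n) :
    (RSeq 𝒯 2 ∧ dsEq 𝒯 2 n) ↔
    ∃ φ : Fin n → L.Sentence,
      (∀ i j : Fin n, i ≠ j → Inconsistent (φ i) (φ j)) ∧
      (∀ i j : Fin n, i ≠ j → Disjoint (nbhd 𝒯 (φ i)) (nbhd 𝒯 (φ j))) ∧
      (⋃ i : Fin n, nbhd 𝒯 (φ i)) = 𝒯 ∧
      ∀ i : Fin n, AMinimal (nbhd 𝒯 (φ i)) := by
  classical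
  simp only [dsEq, RankAux.RSeq_two_iff]
  constructor
  · rintro ⟨hRS, hds⟩
    obtain ⟨⟨φ', hinc', hRSeq'⟩, hub⟩ := hds
    have hRS3 := hRS.2
    obtain ⟨m, rfl⟩ : ∃ m, n = m + 1 := ⟨n - 1, (Nat.succ_pred_eq_of_pos hn).symm⟩
    set χlast : L.Sentence := RankAux.conjFin (fun j : Fin m => (φ' j.castSucc).not)
      with hχdef
    set φ : Fin (m + 1) → L.Sentence := fun i => if i = Fin.last m then χlast else φ' i
      with hφdef
    have hlast : φ (Fin.last m) = χlast := if_pos rfl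
    have hother : ∀ i, i ≠ Fin.last m → φ i = φ' i := fun i h => if_neg h
    have hentl : ∀ (M : Type (max u v)) [L.Structure M], Nonempty M →
        M ⊨ φ' (Fin.last m) → M ⊨ χlast := by
      intro M _ hne hM
      rw [hχdef, RankAux.realize_conjFin]
      intro j
      rw [Sentence.realize_not]
      intro hMc
      exact RankAux.inc_not_realize
        (hinc' _ _ (Fin.castSucc_lt_last j).ne) M hMc hM
    have hsubl : nbhd 𝒯 (φ' (Fin.last m)) ⊆ nbhd 𝒯 χlast := by
      rintro T ⟨hT, hmem⟩
      exact ⟨hT, RankAux.mem_of_mem_of_ent T hmem hentl⟩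
    have hincχ : ∀ i : Fin (m + 1), i ≠ Fin.last m → Inconsistent (φ' i) χlast := by
      intro i hi
      obtain ⟨j, rfl⟩ := Fin.exists_castSucc_eq.2 hi
      apply RankAux.inconsistent_of
      intro M _ hne h1 h2
      rw [hχdef, RankAux.realize_conjFin] at h2
      exact (Sentence.realize_not M).1 (h2 j) h1
    have hincφ : ∀ i j : Fin (m + 1), i ≠ j → Inconsistent (φ i) (φ j) := by
      intro i j hij
      by_cases hi : i = Fin.last m
      · subst hi
        have hj : j ≠ Fin.last m := fun h => hij h.symm
        rw [hlast, hother j hj]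
        exact RankAux.inc_symm (hincχ j hj)
      · by_cases hj : j = Fin.last m
        · subst hj
          rw [hlast, hother i hi]
          exact hincχ i hi
        · rw [hother i hi, hother j hj]
          exact hinc' i j hij
    have hcov : (⋃ i, nbhd 𝒯 (φ i)) = 𝒯 := by
      apply Set.Subset.antisymm (Set.iUnion_subset fun i => RankAux.nbhd_subset _ _)
      intro T hT
      by_cases hc : ∀ j : Fin m, φ' j.castSucc ∉ T.1
      · have hχT : χlast ∈ T.1 :=
          RankAux.mem_conjFin.2 fun j => RankAux.not_mem_iff.2 (hc j)
        exact Set.mem_iUnion.2 ⟨Fin.last m, hT, hlast ▸ hχT⟩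
      · push_neg at hc
        obtain ⟨j, hj⟩ := hc
        refine Set.mem_iUnion.2 ⟨j.castSucc, hT, ?_⟩
        rw [hother _ (Fin.castSucc_lt_last j).ne]
        exact hj
    have hPropφ : ∀ i, (RankAux.accSet (nbhd 𝒯 (φ i))).Infinite ∧
        ¬ RankAux.Splits (nbhd 𝒯 (φ i)) := by
      intro i
      refine ⟨?_, RankAux.not_splits_mono (RankAux.nbhd_subset _ _) hRS.2⟩
      by_cases hi : i = Fin.last m
      · subst hi
        rw [hlast]
        exact ((hRSeq' (Fin.last m)).1).mono (RankAux.accSet_mono hsubl)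
      · rw [hother i hi]
        exact (hRSeq' i).1
    have hAmin : ∀ i, AMinimal (nbhd 𝒯 (φ i)) := by
      intro i
      constructor
      · exact (hPropφ i).1
      · intro χ
        by_contra hcon
        push_neg at hcon
        obtain ⟨h1, h2⟩ := hcon
        have hg1 : (RankAux.accSet (nbhd 𝒯 (φ i ⊓ χ))).Infinite := by
          rw [← RankAux.nbhd_nbhd]
          exact h1
        have hg2 : (RankAux.accSet (nbhd 𝒯 (φ i ⊓ χ.not))).Infinite := by
          rw [← RankAux.nbhd_nbhd]
          exact h2
        set ψ : Fin (m + 1 + 1) → L.Sentence :=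
          Fin.snoc (fun j : Fin (m + 1) => if j = i then φ i ⊓ χ else φ j) (φ i ⊓ χ.not)
          with hψdef
        have hψc : ∀ a : Fin (m + 1),
            ψ a.castSucc = if a = i then φ i ⊓ χ else φ a := fun a => by
          rw [hψdef]; exact Fin.snoc_castSucc _ _ a
        have hψl : ψ (Fin.last (m + 1)) = φ i ⊓ χ.not := by
          rw [hψdef]; exact Fin.snoc_last _ _
        have hwithlast : ∀ a : Fin (m + 1),
            Inconsistent (if a = i then φ i ⊓ χ else φ a) (φ i ⊓ χ.not) := by
          intro a
          by_cases ha : a = i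
          · subst ha
            rw [if_pos rfl]
            apply RankAux.inconsistent_of
            intro M _ hne hM1 hM2
            exact (Sentence.realize_not M).1 (RankAux.realize_inf'.1 hM2).2
              (RankAux.realize_inf'.1 hM1).2
          · rw [if_neg ha]
            exact RankAux.inconsistent_mono (hincφ a i ha)
              (fun M _ hM => hM) (fun M _ hM => (RankAux.realize_inf'.1 hM).1)
        have hbase : ∀ a a' : Fin (m + 1), a ≠ a' → Inconsistent
            (if a = i then φ i ⊓ χ else φ a) (if a' = i then φ i ⊓ χ else φ a') := by
          intro a a' haa'
          by_cases ha : a = i <;> by_cases ha' : a' = i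
          · exact absurd (ha.trans ha'.symm) haa'
          · subst ha
            rw [if_pos rfl, if_neg ha']
            exact RankAux.inconsistent_mono (hincφ a a' haa')
              (fun M _ hM => (RankAux.realize_inf'.1 hM).1) (fun M _ hM => hM)
          · subst ha'
            rw [if_neg ha, if_pos rfl]
            exact RankAux.inconsistent_mono (hincφ a a' haa')
              (fun M _ hM => hM) (fun M _ hM => (RankAux.realize_inf'.1 hM).1)
          · rw [if_neg ha, if_neg ha']
            exact hincφ a a' haa'
        have hpair : ∀ j j' : Fin (m + 1 + 1), j ≠ j' → Inconsistent (ψ j) (ψ j') := by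
          intro j j' hjj'
          rcases Fin.eq_castSucc_or_eq_last j with ⟨a, rfl⟩ | rfl <;>
            rcases Fin.eq_castSucc_or_eq_last j' with ⟨a', rfl⟩ | rfl
          · rw [hψc, hψc]
            exact hbase a a' (fun h => hjj' (by rw [h]))
          · rw [hψc, hψl]
            exact hwithlast a
          · rw [hψc, hψl]
            exact RankAux.inc_symm (hwithlast a')
          · exact absurd rfl hjj'
        have hPropψ : ∀ j, (RankAux.accSet (nbhd 𝒯 (ψ j))).Infinite ∧
            ¬ RankAux.Splits (nbhd 𝒯 (ψ j)) := by
          intro j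
          refine ⟨?_, RankAux.not_splits_mono (RankAux.nbhd_subset _ _) hRS.2⟩
          rcases Fin.eq_castSucc_or_eq_last j with ⟨a, rfl⟩ | rfl
          · by_cases ha : a = i
            · subst ha
              rw [hψc, if_pos rfl]
              exact hg1
            · rw [hψc, if_neg ha]
              exact (hPropφ a).1
          · rw [hψl]
            exact hg2
        have := hub ⟨ψ, hpair, hPropψ⟩
        omega
    exact ⟨φ, hincφ, fun i j h => RankAux.disjoint_nbhd (hincφ i j h) _ _, hcov, hAmin⟩
  · rintro ⟨φ, hinc, hdisj, hcov, hmin⟩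
    have hcov' : 𝒯 = ⋃ i, nbhd 𝒯 (φ i) := hcov.symm
    have hub : ∀ m : ℕ, ∀ ψ : Fin m → L.Sentence,
        (∀ j j' : Fin m, j ≠ j' → Inconsistent (ψ j) (ψ j')) →
        (∀ j, (RankAux.accSet (nbhd 𝒯 (ψ j))).Infinite) → m ≤ n := by
      intro m ψ h1 h2
      exact RankAux.card_le_of_aMinimal_cover hcov' hmin h1 h2
    have hns : ¬ RankAux.Splits 𝒯 := by
      rintro ⟨ψ, h1, h2⟩
      have := hub (n + 1) (fun j => ψ j.1)
        (fun j j' hjj' => h1 j.1 j'.1 (fun hv => hjj' (Fin.val_injective hv)))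
        (fun j => h2 j.1)
      omega
    have hacc : (RankAux.accSet 𝒯).Infinite := by
      obtain ⟨i0⟩ : Nonempty (Fin n) := Fin.pos_iff_nonempty.1 hn
      exact ((hmin i0).1).mono (RankAux.accSet_mono (RankAux.nbhd_subset 𝒯 (φ i0)))
    refine ⟨⟨hacc, hns⟩, ⟨φ, hinc, fun i => ⟨(hmin i).1,
      RankAux.not_splits_mono (RankAux.nbhd_subset _ _) hns⟩⟩, ?_⟩
    rintro m ⟨ψ, h1, h2⟩
    exact hub m ψ h1 (fun j => (h2 j).1)
end
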